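/- Let q be a Lie algebra over a field of characteristic zero and x ∈ q. Assume q is the direct sum of the subspaces [q,x] and z_q(x), i.e. [q,x] + z_q(x) = q and [q,x] ∩ z_q(x) = {0}. Then the normalizer of the centralizer z_q(x) in q equals z_q(x): n_q(z_q(x)) = z_q(x). -/
import Mathlib


/-- Let `q` be a Lie algebra over a field of characteristic zero and
`x ∈ q`. Assume `q = [q,x] ⊕ z_q(x)` as subspaces (here `[q,x]` is the image of `ad x`
and `z_q(x) = ker (ad x)` is the centraliser of `x`). Then the normaliser of `z_q(x)`
in `q` equals `z_q(x)`. -/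
theorem normalizer_of_centralizer_eq_centralizer
    {k L : Type*} [Field k] [CharZero k] [LieRing L] [LieAlgebra k L] (x : L)
    (hsum : LinearMap.range (LieAlgebra.ad k L x) ⊔ LinearMap.ker (LieAlgebra.ad k L x) = ⊤)
    (hint : LinearMap.range (LieAlgebra.ad k L x) ⊓ LinearMap.ker (LieAlgebra.ad k L x) = ⊥) :
    {y : L | ∀ z : L, ⁅x, z⁆ = 0 → ⁅x, ⁅y, z⁆⁆ = 0} = {y : L | ⁅x, y⁆ = 0} := by
  ext y
  simp only [Set.mem_setOf_eq]
  constructor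
  · intro h
    have h1 : ⁅x, ⁅y, x⁆⁆ = 0 := h x (lie_self x)
    have hmem : ⁅x, y⁆ ∈ LinearMap.range (LieAlgebra.ad k L x) ⊓
        LinearMap.ker (LieAlgebra.ad k L x) := by
      refine ⟨⟨y, rfl⟩, ?_⟩
      have : ⁅x, ⁅x, y⁆⁆ = 0 := by
        have := h1
        rw [← lie_skew y x, lie_neg, neg_eq_zero] at this
        exact this
      simpa [LieAlgebra.ad_apply] using this
    rw [hint] at hmem
    simpa using hmem
  · intro h z hz
    rw [leibniz_lie x y z, h, hz, zero_lie, lie_zero, add_zero]
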